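/- Let T be the tree metric on 5 taxa with one internal edge, cherry {1,2} on one side and leaves {3,4,5} on the other, with pendant weights e₁,…,e₅ > 0 and internal weight g > 0 (so T(1,2)=e₁+e₂, T(i,j)=e_i+g+e_j for i∈{1,2}, j∈{3,4,5}, and T(i,j)=e_i+e_j for distinct i,j∈{3,4,5}). Assume e₁ > g and e₂ > g, and let u, w be real parameters with 0 ≤ u < e₁−g and 0 > w > −2·min(e₂−g, e₃, e₄, e₅). Define star tree metrics D with pendant weights (e₁−g−u, e₂+g, e₃, e₄, e₅) at leaves 1,…,5 and D̄ with pendant weights (e₁+g−w/2, e₂−g+w/2, e₃+w/2, e₄+w/2, e₅+w/2) at leaves 1,…,5. Then all ten of these weights are positive, and the tropical mixture D⊕D̄ equals T. -/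
import Mathlib


/-- The star tree metric determined by pendant weights `a`. -/
def starMetricOf {n : ℕ} (a : Fin n → ℝ) : Fin n → Fin n → ℝ :=
  fun i j => if i = j then 0 else a i + a j

/-- The tree metric on 5 taxa with one internal edge of weight `g`, cherry
`{1,2}` (indices `0,1`) on one side and leaves `{3,4,5}` (indices `2,3,4`) on
the other, with pendant weights `e`. -/
def fiveTaxaMetric (e : Fin 5 → ℝ) (g : ℝ) : Fin 5 → Fin 5 → ℝ :=
  fun i j => if i = j then 0
    else e i + e j + (if decide (i.val < 2) ≠ decide (j.val < 2) then g else 0)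

/-- for the 5-taxa one-internal-edge tree metric with cherry `{1,2}`,
`e₁ > g`, `e₂ > g`, and parameters `0 ≤ u < e₁−g`, `0 > w > −2·min(e₂−g,e₃,e₄,e₅)`,
the star tree metrics with pendant weights `(e₁−g−u, e₂+g, e₃, e₄, e₅)` and
`(e₁+g−w/2, e₂−g+w/2, e₃+w/2, e₄+w/2, e₅+w/2)` have all weights positive and
their tropical mixture equals the given tree metric. -/
theorem five_taxa_mixture_case_1_1 (e : Fin 5 → ℝ) (he : ∀ i, 0 < e i)
    (g : ℝ) (hg : 0 < g) (h1 : g < e 0) (h2 : g < e 1)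
    (u w : ℝ) (hu0 : 0 ≤ u) (hu1 : u < e 0 - g)
    (hw0 : w < 0)
    (hw1 : -2 * min (e 1 - g) (min (e 2) (min (e 3) (e 4))) < w) :
    (∀ i, 0 < ![e 0 - g - u, e 1 + g, e 2, e 3, e 4] i) ∧
    (∀ i, 0 < ![e 0 + g - w / 2, e 1 - g + w / 2,
                e 2 + w / 2, e 3 + w / 2, e 4 + w / 2] i) ∧
    (∀ i j, max (starMetricOf ![e 0 - g - u, e 1 + g, e 2, e 3, e 4] i j)
        (starMetricOf ![e 0 + g - w / 2, e 1 - g + w / 2,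
          e 2 + w / 2, e 3 + w / 2, e 4 + w / 2] i j)
        = fiveTaxaMetric e g i j) := by
  have m1 := min_le_left (e 1 - g) (min (e 2) (min (e 3) (e 4)))
  have m2 := min_le_right (e 1 - g) (min (e 2) (min (e 3) (e 4)))
  have m3 := min_le_left (e 2) (min (e 3) (e 4))
  have m4 := min_le_right (e 2) (min (e 3) (e 4))
  have m5 := min_le_left (e 3) (e 4)
  have m6 := min_le_right (e 3) (e 4)
  have hb1 : -2 * (e 1 - g) < w := by nlinarith
  have hb2 : -2 * e 2 < w := by nlinarith
  have hb3 : -2 * e 3 < w := by nlinarith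
  have hb4 : -2 * e 4 < w := by nlinarith
  have he2 := he 2; have he3 := he 3; have he4 := he 4
  refine ⟨?_, ?_, ?_⟩
  · intro i; fin_cases i <;> simp <;> linarith
  · intro i; fin_cases i <;> simp <;> linarith
  · intro i j; fin_cases i <;> fin_cases j <;>
      simp [starMetricOf, fiveTaxaMetric, max_def] <;> (try split_ifs) <;> intros <;> linarith
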